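/- Let ζ ∈ (0,1), μ ∈ ℝ, and δ ∈ ℝ with δ ≠ 0. For each n ≥ 1 set τ_n := ⌊n·ζ⌋ and m_{n,i} := μ + δ·1{i > τ_n} for i = 1, …, n. Then, uniformly in t ∈ [0,1], (1/(n·|δ|)) · ( | Σ_{i=1}^{⌊n·t⌋} m_{n,i} − (⌊n·t⌋/n)·Σ_{i=1}^{n} m_{n,i} | + | Σ_{i=n−⌊n·t⌋+1}^{n} m_{n,i} − (⌊n·t⌋/n)·Σ_{i=1}^{n} m_{n,i} | ) converges as n → ∞ to min{t, 1−t, ζ, 1−ζ}; that is, the supremum over t ∈ [0,1] of the absolute difference between the displayed quantity and min{t, 1−t, ζ, 1−ζ} tends to 0. -/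

import Mathlib

open Filter

lemma sum_formula (μ δ : ℝ) (T j : ℕ) :
    ∑ i ∈ Finset.Icc 1 j, (μ + if T < i then δ else 0)
      = (j : ℝ) * μ + ((j - T : ℕ) : ℝ) * δ := by
  rw [Finset.sum_add_distrib, Finset.sum_const, ← Finset.sum_filter]
  have hf : (Finset.Icc 1 j).filter (fun i => T < i) = Finset.Icc (T + 1) j := by
    ext x; simp only [Finset.mem_filter, Finset.mem_Icc]; omega
  rw [hf, Finset.sum_const, Nat.card_Icc, Nat.card_Icc]
  have h1 : j + 1 - 1 = j := by omega
  have h2 : j + 1 - (T + 1) = j - T := by omega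
  rw [h1, h2, nsmul_eq_mul, nsmul_eq_mul]

lemma sum_split (f : ℕ → ℝ) (n k : ℕ) (hk : k ≤ n) :
    ∑ i ∈ Finset.Icc (n - k + 1) n, f i
      = (∑ i ∈ Finset.Icc 1 n, f i) - ∑ i ∈ Finset.Icc 1 (n - k), f i := by
  have h0 : ∀ j : ℕ, Finset.Icc 1 j = Finset.Ioc 0 j := by
    intro j; ext x; simp only [Finset.mem_Icc, Finset.mem_Ioc]; omega
  have h1 : Finset.Icc (n - k + 1) n = Finset.Ioc (n - k) n := by
    ext x; simp only [Finset.mem_Icc, Finset.mem_Ioc]; omega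
  rw [h0, h0, h1]
  have := Finset.sum_Ioc_consecutive f (Nat.zero_le (n - k)) (Nat.sub_le n k)
  linarith

lemma nat_cast_sub_max (a b : ℕ) : ((a - b : ℕ) : ℝ) = max ((a : ℝ) - b) 0 := by
  rcases le_total b a with h | h
  · rw [Nat.cast_sub h, max_eq_left (sub_nonneg.mpr (Nat.cast_le.mpr h))]
  · rw [Nat.sub_eq_zero_of_le h, max_eq_right (sub_nonpos.mpr (Nat.cast_le.mpr h))]
    simp

lemma maxmin_id (N K T : ℝ) (hK0 : 0 ≤ K) (hKN : K ≤ N) (hT0 : 0 ≤ T) (hTN : T ≤ N) :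
    (N - T) - max (K - T) 0 - max (N - K - T) 0
      = min (min K (N - K)) (min T (N - T)) := by
  simp only [min_def, max_def]
  split_ifs <;> linarith

lemma lip_min (s a t b : ℝ) :
    |min (min s (1 - s)) (min a (1 - a)) - min (min t (1 - t)) (min b (1 - b))|
      ≤ |s - t| + |a - b| := by
  have h1 := le_abs_self (s - t)
  have h2 := neg_abs_le (s - t)
  have h3 := le_abs_self (a - b)
  have h4 := neg_abs_le (a - b)
  rw [abs_le]
  constructor <;> (simp only [min_def]; split_ifs <;> linarith)

lemma keybound (n k T : ℕ) (hn : 0 < n) (hk : k ≤ n) (hT : T ≤ n) (μ δ : ℝ) (hδ : δ ≠ 0) :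
    (1 / ((n : ℝ) * |δ|)) *
        (|(∑ i ∈ Finset.Icc 1 k, (μ + if T < i then δ else 0))
            - ((k : ℝ) / (n : ℝ)) * ∑ i ∈ Finset.Icc 1 n, (μ + if T < i then δ else 0)|
          + |(∑ i ∈ Finset.Icc (n - k + 1) n, (μ + if T < i then δ else 0))
            - ((k : ℝ) / (n : ℝ)) * ∑ i ∈ Finset.Icc 1 n, (μ + if T < i then δ else 0)|)
      = min (min ((k : ℝ) / n) (1 - (k : ℝ) / n)) (min ((T : ℝ) / n) (1 - (T : ℝ) / n)) := by
  have hN : (0 : ℝ) < n := by exact_mod_cast hn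
  have hδ0 : (0 : ℝ) < |δ| := abs_pos.mpr hδ
  have hKN : (k : ℝ) ≤ n := by exact_mod_cast hk
  have hTN : (T : ℝ) ≤ n := by exact_mod_cast hT
  have hK0 : (0 : ℝ) ≤ k := Nat.cast_nonneg k
  have hT0 : (0 : ℝ) ≤ T := Nat.cast_nonneg T
  set N : ℝ := (n : ℝ) with hNdef
  set K : ℝ := (k : ℝ) with hKdef
  set Tr : ℝ := (T : ℝ) with hTdef
  rw [sum_split _ n k hk, sum_formula, sum_formula, sum_formula,
    nat_cast_sub_max k T, nat_cast_sub_max n T, nat_cast_sub_max (n - k) T,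
    Nat.cast_sub hk]
  rw [max_eq_left (by linarith : (0:ℝ) ≤ N - Tr)]
  have s1 : K * μ + max (K - Tr) 0 * δ - K / N * (N * μ + (N - Tr) * δ)
      = δ * (max (K - Tr) 0 - K * (N - Tr) / N) := by
    field_simp; ring
  have s2 : N * μ + (N - Tr) * δ - ((N - K) * μ + max (N - K - Tr) 0 * δ)
        - K / N * (N * μ + (N - Tr) * δ)
      = δ * ((N - Tr) - max (N - K - Tr) 0 - K * (N - Tr) / N) := by
    field_simp; ring
  rw [s1, s2, abs_mul, abs_mul]
  have hd1 : 0 ≤ K * (N - Tr) / N := div_nonneg (mul_nonneg hK0 (by linarith)) hN.le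
  have hle1 : K - Tr ≤ K * (N - Tr) / N := by
    rw [le_div_iff₀ hN]
    nlinarith [mul_le_mul_of_nonneg_left hKN hT0]
  have sign1 : max (K - Tr) 0 - K * (N - Tr) / N ≤ 0 := by
    have := max_le hle1 hd1; linarith
  have hrw : (N - Tr) - K * (N - Tr) / N = (N - Tr) * (N - K) / N := by
    field_simp
  have hd2 : 0 ≤ (N - Tr) - K * (N - Tr) / N := by
    rw [hrw]; exact div_nonneg (mul_nonneg (by linarith) (by linarith)) hN.le
  have hle2 : N - K - Tr ≤ (N - Tr) - K * (N - Tr) / N := by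
    rw [hrw, le_div_iff₀ hN]
    nlinarith [mul_nonneg hT0 hK0]
  have sign2 : 0 ≤ (N - Tr) - max (N - K - Tr) 0 - K * (N - Tr) / N := by
    have := max_le hle2 hd2; linarith
  rw [abs_of_nonpos sign1, abs_of_nonneg sign2]
  have key : 1 / (N * |δ|) *
      (|δ| * -(max (K - Tr) 0 - K * (N - Tr) / N)
        + |δ| * ((N - Tr) - max (N - K - Tr) 0 - K * (N - Tr) / N))
      = ((N - Tr) - max (K - Tr) 0 - max (N - K - Tr) 0) / N := by
    field_simp; ring
  rw [key, maxmin_id N K Tr hK0 hKN hT0 hTN,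
    one_sub_div hN.ne', one_sub_div hN.ne',
    min_div_div_right hN.le, min_div_div_right hN.le, min_div_div_right hN.le]

lemma floor_div_close (n : ℕ) (hn : 0 < n) (x : ℝ) (hx : 0 ≤ x) :
    |((⌊(n : ℝ) * x⌋₊ : ℝ)) / n - x| ≤ 1 / n := by
  have hN : (0 : ℝ) < n := by exact_mod_cast hn
  have h1 : ((⌊(n : ℝ) * x⌋₊ : ℝ)) ≤ (n : ℝ) * x := Nat.floor_le (by positivity)
  have h2 : (n : ℝ) * x < (⌊(n : ℝ) * x⌋₊ : ℝ) + 1 := Nat.lt_floor_add_one _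
  have e : ((⌊(n : ℝ) * x⌋₊ : ℝ)) / n - x = (((⌊(n : ℝ) * x⌋₊ : ℝ)) - (n : ℝ) * x) / n := by
    rw [sub_div, mul_div_cancel_left₀ x hN.ne']
  rw [e, abs_div, abs_of_pos hN]
  gcongr
  rw [abs_le]
  constructor <;> linarith

theorem stmt_11 (ζ : ℝ) (hζ : ζ ∈ Set.Ioo (0 : ℝ) 1) (μ δ : ℝ) (hδ : δ ≠ 0)
    (τ : ℕ → ℕ) (hτ : ∀ n, τ n = ⌊(n : ℝ) * ζ⌋₊)
    (m : ℕ → ℕ → ℝ) (hm : ∀ n i, m n i = μ + (if τ n < i then δ else 0)) :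
    Tendsto (fun n : ℕ =>
        sSup ((fun t : ℝ =>
          |(1 / ((n : ℝ) * |δ|)) *
              (|(∑ i ∈ Finset.Icc 1 ⌊(n : ℝ) * t⌋₊, m n i)
                  - ((⌊(n : ℝ) * t⌋₊ : ℝ) / (n : ℝ)) * ∑ i ∈ Finset.Icc 1 n, m n i|
                + |(∑ i ∈ Finset.Icc (n - ⌊(n : ℝ) * t⌋₊ + 1) n, m n i)
                  - ((⌊(n : ℝ) * t⌋₊ : ℝ) / (n : ℝ)) * ∑ i ∈ Finset.Icc 1 n, m n i|)
            - min (min t (1 - t)) (min ζ (1 - ζ))|) '' Set.Icc (0 : ℝ) 1))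
      atTop (nhds 0) := by
  obtain ⟨hz0, hz1⟩ := hζ
  apply tendsto_of_tendsto_of_tendsto_of_le_of_le' (g := fun _ : ℕ => (0 : ℝ))
    (h := fun n : ℕ => 2 / (n : ℝ)) tendsto_const_nhds
    (tendsto_const_div_atTop_nhds_zero_nat 2)
  · filter_upwards with n
    apply Real.sSup_nonneg
    rintro x ⟨t, ht, rfl⟩
    exact abs_nonneg _
  · filter_upwards [eventually_ge_atTop 1] with n hn
    have hn0 : 0 < n := hn
    have hN : (0 : ℝ) < n := by exact_mod_cast hn0
    apply Real.sSup_le _ (by positivity)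
    rintro x ⟨t, ht, rfl⟩
    obtain ⟨ht0, ht1⟩ := ht
    have hk : ⌊(n : ℝ) * t⌋₊ ≤ n := by
      calc ⌊(n : ℝ) * t⌋₊ ≤ ⌊(n : ℝ)⌋₊ := Nat.floor_mono (by nlinarith)
      _ = n := Nat.floor_natCast n
    have hT : ⌊(n : ℝ) * ζ⌋₊ ≤ n := by
      calc ⌊(n : ℝ) * ζ⌋₊ ≤ ⌊(n : ℝ)⌋₊ := Nat.floor_mono (by nlinarith)
      _ = n := Nat.floor_natCast n
    simp only [hm, hτ]
    rw [keybound n ⌊(n : ℝ) * t⌋₊ ⌊(n : ℝ) * ζ⌋₊ hn0 hk hT μ δ hδ]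
    have h1 : |((⌊(n : ℝ) * t⌋₊ : ℝ)) / n - t| ≤ 1 / n := floor_div_close n hn0 t ht0
    have h2 : |((⌊(n : ℝ) * ζ⌋₊ : ℝ)) / n - ζ| ≤ 1 / n := floor_div_close n hn0 ζ hz0.le
    calc |min (min ((⌊(n : ℝ) * t⌋₊ : ℝ) / n) (1 - (⌊(n : ℝ) * t⌋₊ : ℝ) / n))
            (min ((⌊(n : ℝ) * ζ⌋₊ : ℝ) / n) (1 - (⌊(n : ℝ) * ζ⌋₊ : ℝ) / n))
          - min (min t (1 - t)) (min ζ (1 - ζ))|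
        ≤ |((⌊(n : ℝ) * t⌋₊ : ℝ)) / n - t| + |((⌊(n : ℝ) * ζ⌋₊ : ℝ)) / n - ζ| :=
          lip_min _ _ _ _
      _ ≤ 1 / n + 1 / n := add_le_add h1 h2
      _ = 2 / n := by ring
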